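/- Fix k ≥ 3. Let F be a finite k-uniform hypergraph (a finite index set F with a map e assigning to each i ∈ F a set e(i) of vertices with |e(i)| = k) such that every nonempty subfamily G ⊆ F satisfies 2·|V(G)| > (2k−3)·|G|, where V(G) = ⋃_{i∈G} e(i). Then there is an enumeration C₁, …, C_m of the members of F such that for every i, the edge e(C_i) contains at least k−2 vertices that appear in none of e(C₁), …, e(C_{i−1}). -/

import Mathlib

lemma key_edge {ι W : Type*} [DecidableEq ι] [DecidableEq W] (k : ℕ) (hk : 3 ≤ k)
    (G : Finset ι) (e : ι → Finset W) (hcard : ∀ i ∈ G, (e i).card = k)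
    (hG : G.Nonempty)
    (hsp : (2 * k - 3) * G.card < 2 * (G.biUnion e).card) :
    ∃ i ∈ G, k - 2 ≤ ((e i).filter fun v => ∀ j ∈ G.erase i, v ∉ e j).card := by
  by_contra h
  push_neg at h
  set V := G.biUnion e with hV
  set deg : W → ℕ := fun v => (G.filter fun i => v ∈ e i).card with hdeg
  have hsub : ∀ i ∈ G, e i ⊆ V := fun i hi => Finset.subset_biUnion_of_mem e hi
  have hswap : ∑ v ∈ V, deg v = ∑ i ∈ G, (e i).card := by
    have : ∀ i ∈ G, (e i).card = (V.filter fun v => v ∈ e i).card := by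
      intro i hi
      congr 1
      ext v
      simp only [Finset.mem_filter]
      exact ⟨fun hv => ⟨hsub i hi hv, hv⟩, fun hv => hv.2⟩
    rw [Finset.sum_congr rfl this]
    simp only [hdeg, Finset.card_filter]
    rw [Finset.sum_comm]
  have hsum : ∑ v ∈ V, deg v = k * G.card := by
    rw [hswap, Finset.sum_congr rfl hcard, Finset.sum_const, smul_eq_mul, mul_comm]
  set D1 := V.filter (fun v => deg v = 1) with hD1def
  have h2V : 2 * V.card ≤ (∑ v ∈ V, deg v) + D1.card := by
    have : 2 * V.card = ∑ v ∈ V, 2 := by rw [Finset.sum_const, smul_eq_mul, mul_comm]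
    rw [this, hD1def, Finset.card_filter, ← Finset.sum_add_distrib]
    apply Finset.sum_le_sum
    intro v hv
    have h1 : 1 ≤ deg v := by
      rw [hdeg]
      rw [hV, Finset.mem_biUnion] at hv
      obtain ⟨i, hi, hvi⟩ := hv
      exact Finset.card_pos.mpr ⟨i, Finset.mem_filter.mpr ⟨hi, hvi⟩⟩
    split_ifs with hd <;> omega
  have hD1 : D1.card ≤ (k - 3) * G.card := by
    have e1 : D1.card = ∑ v ∈ D1, deg v := by
      rw [Finset.sum_congr rfl (fun v hv => (Finset.mem_filter.mp hv).2)]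
      simp [hD1def]
    have e2 : ∑ v ∈ D1, deg v = ∑ i ∈ G, (D1.filter fun v => v ∈ e i).card := by
      simp only [hdeg, Finset.card_filter]
      rw [Finset.sum_comm]
    rw [e1, e2]
    calc ∑ i ∈ G, (D1.filter fun v => v ∈ e i).card
        ≤ ∑ i ∈ G, (k - 3) := by
          apply Finset.sum_le_sum
          intro i hi
          have hss : (D1.filter fun v => v ∈ e i) ⊆
              (e i).filter fun v => ∀ j ∈ G.erase i, v ∉ e j := by
            intro v hv
            rw [Finset.mem_filter] at hv ⊢
            obtain ⟨hvD, hvi⟩ := hv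
            have hdv : deg v = 1 := (Finset.mem_filter.mp hvD).2
            refine ⟨hvi, fun j hj hvj => ?_⟩
            rw [Finset.mem_erase] at hj
            have : ({i, j} : Finset ι) ⊆ G.filter fun i => v ∈ e i := by
              intro x hx
              rw [Finset.mem_insert, Finset.mem_singleton] at hx
              rcases hx with rfl | rfl
              · exact Finset.mem_filter.mpr ⟨hi, hvi⟩
              · exact Finset.mem_filter.mpr ⟨hj.2, hvj⟩
            have h2 := Finset.card_le_card this
            rw [Finset.card_pair (Ne.symm hj.1)] at h2
            simp only [hdeg] at hdv
            omega
          have := Finset.card_le_card hss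
          have hlt := h i hi
          omega
      _ = (k - 3) * G.card := by rw [Finset.sum_const, smul_eq_mul, mul_comm]
  have hfin : k * G.card + (k - 3) * G.card = (2 * k - 3) * G.card := by
    rw [← add_mul]
    congr 1
    omega
  omega

theorem stmt2 {ι W : Type*} [DecidableEq ι] [DecidableEq W] (k : ℕ) (hk : 3 ≤ k)
    (F : Finset ι) (e : ι → Finset W) (hcard : ∀ i ∈ F, (e i).card = k)
    (hsparse : ∀ G ⊆ F, G.Nonempty → (2 * k - 3) * G.card < 2 * (G.biUnion e).card) :
    ∃ C : Fin F.card → ι, Function.Injective C ∧ (∀ i, C i ∈ F) ∧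
      ∀ i : Fin F.card,
        k - 2 ≤ ((e (C i)).filter fun v => ∀ j : Fin F.card, j < i → v ∉ e (C j)).card := by
  obtain ⟨n, hn⟩ : ∃ n, F.card = n := ⟨F.card, rfl⟩
  induction n generalizing F with
  | zero =>
    rw [hn]
    exact ⟨Fin.elim0, fun a => a.elim0, fun i => i.elim0, fun i => i.elim0⟩
  | succ n ih =>
    have hFne : F.Nonempty := Finset.card_pos.mp (by omega)
    obtain ⟨i₀, hi₀, hpriv⟩ := key_edge k hk F e hcard hFne (hsparse F subset_rfl hFne)
    have hcard' : (F.erase i₀).card = n := by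
      rw [Finset.card_erase_of_mem hi₀, hn]
      omega
    have IH := ih (F.erase i₀)
      (fun i hi => hcard i (Finset.mem_of_mem_erase hi))
      (fun G hG hGne => hsparse G (hG.trans (Finset.erase_subset _ _)) hGne)
      hcard'
    rw [hcard'] at IH
    obtain ⟨C', hinj', hmem', hnew'⟩ := IH
    have hC'ne : ∀ j, C' j ≠ i₀ := fun j => Finset.ne_of_mem_erase (hmem' j)
    rw [hn]
    refine ⟨Fin.snoc C' i₀, ?_, ?_, ?_⟩
    · intro a b hab
      rcases Fin.eq_castSucc_or_eq_last a with ⟨a', rfl⟩ | rfl <;>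
        rcases Fin.eq_castSucc_or_eq_last b with ⟨b', rfl⟩ | rfl
      · rw [Fin.snoc_castSucc, Fin.snoc_castSucc] at hab
        exact congrArg Fin.castSucc (hinj' hab)
      · rw [Fin.snoc_castSucc, Fin.snoc_last] at hab
        exact absurd hab (hC'ne a')
      · rw [Fin.snoc_castSucc, Fin.snoc_last] at hab
        exact absurd hab.symm (hC'ne b')
      · rfl
    · intro i
      rcases Fin.eq_castSucc_or_eq_last i with ⟨j, rfl⟩ | rfl
      · rw [Fin.snoc_castSucc]
        exact Finset.mem_of_mem_erase (hmem' j)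
      · rw [Fin.snoc_last]
        exact hi₀
    · intro i
      rcases Fin.eq_castSucc_or_eq_last i with ⟨j, rfl⟩ | rfl
      · rw [Fin.snoc_castSucc]
        have hset : ((e (C' j)).filter fun v => ∀ j' : Fin (n + 1),
              j' < Fin.castSucc j → v ∉ e ((Fin.snoc C' i₀ : Fin (n+1) → ι) j')) =
            (e (C' j)).filter fun v => ∀ j'' : Fin n, j'' < j → v ∉ e (C' j'') := by
          apply Finset.filter_congr
          intro v _
          constructor
          · intro hall j'' hj''
            have := hall (Fin.castSucc j'') (Fin.castSucc_lt_castSucc_iff.mpr hj'')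
            rwa [Fin.snoc_castSucc] at this
          · intro hall j' hj'
            rcases Fin.eq_castSucc_or_eq_last j' with ⟨j'', rfl⟩ | rfl
            · rw [Fin.snoc_castSucc]
              exact hall j'' (Fin.castSucc_lt_castSucc_iff.mp hj')
            · exact absurd hj' (by simp [Fin.lt_iff_val_lt_val])
        rw [hset]
        exact hnew' j
      · rw [Fin.snoc_last]
        refine le_trans hpriv (Finset.card_le_card ?_)
        intro v hv
        rw [Finset.mem_filter] at hv ⊢
        refine ⟨hv.1, fun j' hj' => ?_⟩
        rcases Fin.eq_castSucc_or_eq_last j' with ⟨j'', rfl⟩ | rfl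
        · rw [Fin.snoc_castSucc]
          exact hv.2 _ (hmem' j'')
        · exact absurd hj' (lt_irrefl _)
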